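/- Let X be a finite set, ω a distribution on X, and ψ a nonempty finite multiset of factors on X such that the conjunction &ψ has nonzero validity in ω. Then the Pearl update increases Pearl validity: (ω ⊳_P ψ) ⊨_P ψ ≥ ω ⊨_P ψ. -/
import Mathlib


noncomputable section

/-- The validity `ω ⊨ p` of a factor `p` in a distribution `ω` on a finite set. -/
def val {X : Type*} [Fintype X] (ω p : X → ℝ) : ℝ := ∑ x, ω x * p x

/-- The Bayesian update `ω|p` of a distribution `ω` with a factor `p`. -/
def upd {X : Type*} [Fintype X] (ω p : X → ℝ) : X → ℝ := fun x => ω x * p x / val ω p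

/-- The conjunction `&ψ` of an evidence multiset `ψ`. -/
def conjM {X : Type*} [DecidableEq (X → ℝ)] (ψ : Multiset (X → ℝ)) : X → ℝ :=
  fun x => ∏ p ∈ ψ.toFinset, p x ^ ψ.count p

/-- The Pearl validity `ω ⊨_P ψ` of an evidence multiset `ψ` in `ω`. -/
def pearlVal {X : Type*} [Fintype X] [DecidableEq (X → ℝ)]
    (ω : X → ℝ) (ψ : Multiset (X → ℝ)) : ℝ :=
  (Nat.multinomial ψ.toFinset ψ.count : ℝ) * val ω (conjM ψ)

/-- The Pearl update `ω ⊳_P ψ := ω|(&ψ)`. -/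
def pUpd {X : Type*} [Fintype X] [DecidableEq (X → ℝ)]
    (ω : X → ℝ) (ψ : Multiset (X → ℝ)) : X → ℝ :=
  upd ω (conjM ψ)

/-- Pearl updating increases Pearl validity. -/
theorem pearl_update_increases_pearl_validity
    {X : Type*} [Fintype X] [DecidableEq (X → ℝ)]
    (ω : X → ℝ) (ψ : Multiset (X → ℝ))
    (hω0 : ∀ x, 0 ≤ ω x) (hω1 : ∑ x, ω x = 1)
    (hψ : ψ ≠ 0)
    (hfac : ∀ p ∈ ψ, ∀ x, 0 ≤ p x)
    (hval : 0 < val ω (conjM ψ)) :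
    pearlVal ω ψ ≤ pearlVal (pUpd ω ψ) ψ := by
  set q := conjM ψ with hq
  have key : val ω q * val ω q ≤ ∑ x, ω x * q x ^ 2 := by
    have h := Finset.sum_sq_le_sum_mul_sum_of_sq_eq_mul (Finset.univ : Finset X)
      (r := fun x => ω x * q x) (f := fun x => ω x) (g := fun x => ω x * q x ^ 2)
      (fun i _ => hω0 i) (fun i _ => mul_nonneg (hω0 i) (sq_nonneg _))
      (fun i _ => by ring)
    simpa [val, hω1, sq] using h
  have hupd : val (pUpd ω ψ) q = (∑ x, ω x * q x ^ 2) / val ω q := by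
    simp only [pUpd, upd, val, ← hq, Finset.sum_div]
    apply Finset.sum_congr rfl
    intro x _
    ring
  have : val ω q ≤ val (pUpd ω ψ) q := by
    rw [hupd, le_div_iff₀ hval]
    exact key
  unfold pearlVal
  exact mul_le_mul_of_nonneg_left this (by positivity)
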